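/- Let c ∈ ℂ with Re(c) > 0 and let τ ∈ S_c. Then |λ| < 1 (so λ² ≠ 1 and the coefficients w₁, w₂, w₃ are well defined), and moreover Re(w₂) > 0, Re(2w₂ + w₃) > 0 and Re(2w₂ − w₃) > 0. -/

import Mathlib

open Complex MeasureTheory

/-- The maximal sector `S_c` of the bounded holomorphic semigroup generated by `-H_c`. -/
noncomputable def sector (c : ℂ) : Set ℂ :=
  if 0 < c.im then
    {τ : ℂ | τ ≠ 0 ∧ -(Real.pi / 2) ≤ τ.arg ∧ τ.arg ≤ Real.pi / 2 - c.arg}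
  else if c.im = 0 then
    {τ : ℂ | τ ≠ 0 ∧ -(Real.pi / 2) < τ.arg ∧ τ.arg < Real.pi / 2}
  else
    {τ : ℂ | τ ≠ 0 ∧ -(Real.pi / 2) - c.arg ≤ τ.arg ∧ τ.arg ≤ Real.pi / 2}

/-- `λ = exp(-2 c^{1/2} τ)`. -/
noncomputable def lam (c τ : ℂ) : ℂ := Complex.exp (-2 * c ^ ((1 : ℂ) / 2) * τ)

/-- `w₁ = c^{1/4} λ^{1/2} (π (1 - λ²))^{-1/2}`. -/
noncomputable def w₁ (c τ : ℂ) : ℂ :=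
  c ^ ((1 : ℂ) / 4) * lam c τ ^ ((1 : ℂ) / 2) *
    ((Real.pi : ℂ) * (1 - lam c τ ^ 2)) ^ (-(1 : ℂ) / 2)

/-- `w₂ = c^{1/2} (1 + λ²) / (2 (1 - λ²))`. -/
noncomputable def w₂ (c τ : ℂ) : ℂ :=
  c ^ ((1 : ℂ) / 2) * (1 + lam c τ ^ 2) / (2 * (1 - lam c τ ^ 2))

/-- `w₃ = 2 c^{1/2} λ / (1 - λ²)`. -/
noncomputable def w₃ (c τ : ℂ) : ℂ :=
  2 * c ^ ((1 : ℂ) / 2) * lam c τ / (1 - lam c τ ^ 2)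

/-- The Mehler kernel `K_c(τ, x, y) = w₁ exp(w₃ x y - w₂ (x² + y²))`. -/
noncomputable def mehlerK (c τ : ℂ) (x y : ℝ) : ℂ :=
  w₁ c τ * Complex.exp (w₃ c τ * (x : ℂ) * (y : ℂ) - w₂ c τ * ((x : ℂ) ^ 2 + (y : ℂ) ^ 2))



private lemma key_ineq (a r t : ℝ) (ha : 0 < Real.cos a) (hr : 0 < r)
    (h1 : 0 ≤ r * Real.cos a - t * Real.sin a) (h2 : 0 ≤ r * Real.cos a + t * Real.sin a) :
    2 * Real.exp (-(2*r)) * |Real.sin a * Real.sin (2*t)| <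
      Real.cos a * (1 - Real.exp (-(2*r))^2) := by
  have habs : |t * Real.sin a| ≤ r * Real.cos a := abs_le.2 ⟨by linarith, by linarith⟩
  have hs2t : |Real.sin (2*t)| ≤ |2*t| := Real.abs_sin_le_abs
  have hsinh : 2*r < Real.sinh (2*r) := Real.self_lt_sinh_iff.2 (by linarith)
  have hE : 0 < Real.exp (-(2*r)) := Real.exp_pos _
  have hid : 1 - Real.exp (-(2*r))^2 = 2 * Real.exp (-(2*r)) * Real.sinh (2*r) := by
    rw [Real.sinh_eq, Real.exp_neg]
    have := Real.exp_pos (2*r)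
    field_simp
  have h3 : |Real.sin a * Real.sin (2*t)| ≤ 2*(r*Real.cos a) := by
    calc |Real.sin a * Real.sin (2*t)| = |Real.sin a| * |Real.sin (2*t)| := abs_mul _ _
      _ ≤ |Real.sin a| * |2*t| :=
          mul_le_mul_of_nonneg_left hs2t (abs_nonneg _)
      _ = 2 * |t * Real.sin a| := by rw [abs_mul, abs_mul, abs_of_pos (by norm_num : (0:ℝ) < 2)]; ring
      _ ≤ 2*(r*Real.cos a) := by linarith
  rw [hid]
  nlinarith [mul_le_mul_of_nonneg_left h3 hE.le, mul_lt_mul_of_pos_left hsinh (mul_pos hE ha)]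

private lemma re_div_pos (s l : ℂ) (h : 1 - l ≠ 0)
    (hnum : 0 < s.re * (1 - (l.re^2 + l.im^2)) - 2 * s.im * l.im) :
    0 < (s * (1 + l) / (1 - l)).re := by
  rw [Complex.div_re, ← add_div]
  apply div_pos _ (Complex.normSq_pos.2 h)
  calc (0:ℝ) < s.re * (1 - (l.re^2 + l.im^2)) - 2 * s.im * l.im := hnum
    _ = (s * (1 + l)).re * (1 - l).re + (s * (1 + l)).im * (1 - l).im := by
        simp only [Complex.mul_re, Complex.mul_im, Complex.add_re, Complex.add_im,
          Complex.sub_re, Complex.sub_im, Complex.one_re, Complex.one_im]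
        ring

private lemma re_div_pos' (s l : ℂ) (h : 1 + l ≠ 0)
    (hnum : 0 < s.re * (1 - (l.re^2 + l.im^2)) + 2 * s.im * l.im) :
    0 < (s * (1 - l) / (1 + l)).re := by
  rw [Complex.div_re, ← add_div]
  apply div_pos _ (Complex.normSq_pos.2 h)
  calc (0:ℝ) < s.re * (1 - (l.re^2 + l.im^2)) + 2 * s.im * l.im := hnum
    _ = (s * (1 - l)).re * (1 + l).re + (s * (1 - l)).im * (1 + l).im := by
        simp only [Complex.mul_re, Complex.mul_im, Complex.add_re, Complex.add_im,
          Complex.sub_re, Complex.sub_im, Complex.one_re, Complex.one_im]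
        ring

private lemma sector_facts (c : ℂ) (hc : 0 < c.re) (τ : ℂ) (hτ : τ ∈ sector c) :
    τ ≠ 0 ∧ 0 ≤ Real.cos τ.arg ∧ 0 ≤ Real.cos (c.arg + τ.arg) ∧
    -(Real.pi/2) < c.arg/2 + τ.arg ∧ c.arg/2 + τ.arg < Real.pi/2 := by
  have hargc : |c.arg| < Real.pi/2 := Complex.abs_arg_lt_pi_div_two_iff.2 (Or.inl hc)
  have hargc1 : c.arg < Real.pi/2 := lt_of_abs_lt hargc
  have hargc2 : -(Real.pi/2) < c.arg := neg_lt_of_abs_lt hargc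
  unfold sector at hτ
  split_ifs at hτ with h1 h2
  · obtain ⟨h0, hl, hr⟩ := hτ
    have hpos : 0 < c.arg := by
      rcases lt_or_eq_of_le (Complex.arg_nonneg_iff.2 h1.le) with h | h
      · exact h
      · exact absurd (Complex.arg_eq_zero_iff.1 h.symm).2 (ne_of_gt h1)
    refine ⟨h0, Real.cos_nonneg_of_mem_Icc ⟨hl, by linarith⟩,
      Real.cos_nonneg_of_mem_Icc ⟨by linarith, by linarith⟩, by linarith, by linarith⟩
  · obtain ⟨h0, hl, hr⟩ := hτ
    have h0' : c.arg = 0 := Complex.arg_eq_zero_iff.2 ⟨hc.le, h2⟩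
    refine ⟨h0, Real.cos_nonneg_of_mem_Icc ⟨hl.le, hr.le⟩,
      Real.cos_nonneg_of_mem_Icc ⟨by linarith, by linarith⟩, by linarith, by linarith⟩
  · obtain ⟨h0, hl, hr⟩ := hτ
    have hneg : c.arg < 0 := Complex.arg_neg_iff.2 (lt_of_not_ge fun h => h1 (lt_of_le_of_ne h (Ne.symm h2)))
    refine ⟨h0, Real.cos_nonneg_of_mem_Icc ⟨by linarith, hr⟩,
      Real.cos_nonneg_of_mem_Icc ⟨by linarith, by linarith⟩, by linarith, by linarith⟩

/-- For `Re c > 0` and `τ ∈ S_c` one has `|λ| < 1` (so `λ² ≠ 1` and the coefficients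
`w₁, w₂, w₃` are well defined), `Re w₂ > 0`, `Re(2w₂ + w₃) > 0` and `Re(2w₂ - w₃) > 0`. -/
theorem mehler_coefficients_pos (c : ℂ) (hc : 0 < c.re) (τ : ℂ) (hτ : τ ∈ sector c) :
    ‖lam c τ‖ < 1 ∧ lam c τ ^ 2 ≠ 1 ∧
    0 < (w₂ c τ).re ∧ 0 < (2 * w₂ c τ + w₃ c τ).re ∧ 0 < (2 * w₂ c τ - w₃ c τ).re := by
  obtain ⟨hτ0, hcb, hcab, hab1, hab2⟩ := sector_facts c hc τ hτ
  have hc0 : c ≠ 0 := fun h => by rw [h] at hc; simp at hc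
  have hargc : |c.arg| < Real.pi/2 := Complex.abs_arg_lt_pi_div_two_iff.2 (Or.inl hc)
  have hargc1 : c.arg < Real.pi/2 := lt_of_abs_lt hargc
  have hargc2 : -(Real.pi/2) < c.arg := neg_lt_of_abs_lt hargc
  set a : ℝ := c.arg/2 with ha_def
  set b : ℝ := τ.arg with hb_def
  have hca : 0 < Real.cos a := Real.cos_pos_of_mem_Ioo ⟨by rw [ha_def]; linarith, by rw [ha_def]; linarith⟩
  set ρ : ℝ := Real.exp (Real.log (‖c‖) / 2) with hρ_def
  have hρ : 0 < ρ := Real.exp_pos _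
  set m : ℝ := ‖τ‖ with hm_def
  have hm : 0 < m := norm_pos_iff.mpr hτ0
  set s : ℂ := c ^ ((1:ℂ)/2) with hs_def
  -- real and imaginary parts of s
  have hre' : (Complex.log c * ((1:ℂ)/2)).re = Real.log (‖c‖) / 2 := by
    simp [Complex.mul_re, Complex.div_re, Complex.log_re, Complex.log_im, Complex.normSq_apply]
    ring
  have him' : (Complex.log c * ((1:ℂ)/2)).im = a := by
    simp [Complex.mul_im, Complex.div_re, Complex.div_im, Complex.log_re, Complex.log_im,
      Complex.normSq_apply, ha_def]
    ring
  have hsre : s.re = ρ * Real.cos a := by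
    rw [hs_def, Complex.cpow_def_of_ne_zero hc0, Complex.exp_re, hre', him']
  have hsim : s.im = ρ * Real.sin a := by
    rw [hs_def, Complex.cpow_def_of_ne_zero hc0, Complex.exp_im, hre', him']
  -- real and imaginary parts of τ
  have hτre : τ.re = m * Real.cos b := by
    rw [hb_def, Complex.cos_arg hτ0, hm_def]
    field_simp
  have hτim : τ.im = m * Real.sin b := by
    rw [hb_def, Complex.sin_arg, hm_def]
    field_simp
  -- real and imaginary parts of z = s * τ
  set r : ℝ := ρ * m * Real.cos (a + b) with hr_def
  set t : ℝ := ρ * m * Real.sin (a + b) with ht_def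
  have hzre : (s * τ).re = r := by
    rw [Complex.mul_re, hsre, hsim, hτre, hτim, hr_def, Real.cos_add]; ring
  have hzim : (s * τ).im = t := by
    rw [Complex.mul_im, hsre, hsim, hτre, hτim, ht_def, Real.sin_add]; ring
  have hrpos : 0 < r := by
    rw [hr_def]
    exact mul_pos (mul_pos hρ hm) (Real.cos_pos_of_mem_Ioo ⟨hab1, hab2⟩)
  -- λ facts
  set E : ℝ := Real.exp (-(2*r)) with hE_def
  have hE : 0 < E := Real.exp_pos _
  have hw : -2 * c ^ ((1:ℂ)/2) * τ = (-2 : ℂ) * (s * τ) := by rw [hs_def]; ring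
  have hwre : (-2 * c ^ ((1:ℂ)/2) * τ).re = -(2*r) := by
    rw [hw, Complex.mul_re, hzre, hzim]
    norm_num
  have hwim : (-2 * c ^ ((1:ℂ)/2) * τ).im = -(2*t) := by
    rw [hw, Complex.mul_im, hzre, hzim]
    norm_num
  have hl_abs : ‖lam c τ‖ = E := by
    rw [lam, Complex.norm_exp, hwre, hE_def]
  have hl_lt : ‖lam c τ‖ < 1 := by
    rw [hl_abs, hE_def]
    exact Real.exp_lt_one_iff.2 (by linarith)
  have hl_im : (lam c τ).im = -(E * Real.sin (2*t)) := by
    rw [lam, Complex.exp_im, hwre, hwim, Real.sin_neg, hE_def]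
    ring
  have hl_sq : (lam c τ).re^2 + (lam c τ).im^2 = E^2 := by
    have h1 : (lam c τ).re^2 + (lam c τ).im^2 = ‖lam c τ‖^2 := by
      rw [Complex.sq_norm, Complex.normSq_apply]; ring
    rw [h1, hl_abs]
  -- nonvanishing denominators
  have hne1 : (1:ℂ) - lam c τ ≠ 0 := by
    intro h
    have : lam c τ = 1 := by linear_combination -h
    rw [this] at hl_lt; simp at hl_lt
  have hne2 : (1:ℂ) + lam c τ ≠ 0 := by
    intro h
    have : lam c τ = -1 := by linear_combination h
    rw [this] at hl_lt; simp at hl_lt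
  have hne3 : (1:ℂ) - lam c τ^2 ≠ 0 := by
    have : (1:ℂ) - lam c τ^2 = (1 - lam c τ) * (1 + lam c τ) := by ring
    rw [this]
    exact mul_ne_zero hne1 hne2
  have hsq1 : lam c τ ^ 2 ≠ 1 := fun h => hne3 (by rw [h]; ring)
  -- key inequality hypotheses
  have e1 : r * Real.cos a - t * Real.sin a = ρ * m * Real.cos (c.arg + b) := by
    have : Real.cos ((a + b) + a) = Real.cos (c.arg + b) := by
      congr 1; rw [ha_def]; ring
    rw [hr_def, ht_def, ← this, Real.cos_add (a+b) a]; ring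
  have e2 : r * Real.cos a + t * Real.sin a = ρ * m * Real.cos b := by
    have : Real.cos ((a + b) - a) = Real.cos b := by congr 1; ring
    rw [hr_def, ht_def, ← this, Real.cos_sub (a+b) a]; ring
  have h1 : 0 ≤ r * Real.cos a - t * Real.sin a := by
    rw [e1]; exact mul_nonneg (mul_pos hρ hm).le hcab
  have h2 : 0 ≤ r * Real.cos a + t * Real.sin a := by
    rw [e2]; exact mul_nonneg (mul_pos hρ hm).le hcb
  have key := key_ineq a r t hca hrpos h1 h2
  rw [← hE_def] at key
  have habs1 : -(|Real.sin a * Real.sin (2*t)|) ≤ Real.sin a * Real.sin (2*t) :=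
    neg_abs_le _
  have habs2 : Real.sin a * Real.sin (2*t) ≤ |Real.sin a * Real.sin (2*t)| := le_abs_self _
  clear_value E t r m ρ s b a
  -- numerators
  have base1 : 0 < Real.cos a * (1 - E^2) + 2*E*(Real.sin a * Real.sin (2*t)) := by
    have h2E : (0:ℝ) ≤ 2*E := by positivity
    have := mul_le_mul_of_nonneg_left habs1 h2E
    linarith only [key, this]
  have base2 : 0 < Real.cos a * (1 - E^2) - 2*E*(Real.sin a * Real.sin (2*t)) := by
    have h2E : (0:ℝ) ≤ 2*E := by positivity
    have := mul_le_mul_of_nonneg_left habs2 h2E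
    linarith only [key, this]
  have hnum1 : 0 < s.re * (1 - ((lam c τ).re^2 + (lam c τ).im^2)) - 2 * s.im * (lam c τ).im := by
    rw [hl_sq, hl_im, hsre, hsim]
    calc (0:ℝ) < ρ * (Real.cos a * (1 - E^2) + 2*E*(Real.sin a * Real.sin (2*t))) :=
          mul_pos hρ base1
      _ = ρ * Real.cos a * (1 - E^2) - 2 * (ρ * Real.sin a) * (-(E * Real.sin (2*t))) := by ring
  have hnum2 : 0 < s.re * (1 - ((lam c τ).re^2 + (lam c τ).im^2)) + 2 * s.im * (lam c τ).im := by
    rw [hl_sq, hl_im, hsre, hsim]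
    calc (0:ℝ) < ρ * (Real.cos a * (1 - E^2) - 2*E*(Real.sin a * Real.sin (2*t))) :=
          mul_pos hρ base2
      _ = ρ * Real.cos a * (1 - E^2) + 2 * (ρ * Real.sin a) * (-(E * Real.sin (2*t))) := by ring
  -- algebraic identities
  have hA : 2 * w₂ c τ + w₃ c τ = s * (1 + lam c τ) / (1 - lam c τ) := by
    rw [w₂, w₃, ← hs_def]
    field_simp
    ring
  have hB : 2 * w₂ c τ - w₃ c τ = s * (1 - lam c τ) / (1 + lam c τ) := by
    rw [w₂, w₃, ← hs_def]
    field_simp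
    ring
  have hApos : 0 < (2 * w₂ c τ + w₃ c τ).re := by
    rw [hA]; exact re_div_pos s _ hne1 hnum1
  have hBpos : 0 < (2 * w₂ c τ - w₃ c τ).re := by
    rw [hB]; exact re_div_pos' s _ hne2 hnum2
  have hsum : (2 * w₂ c τ + w₃ c τ).re + (2 * w₂ c τ - w₃ c τ).re = 4 * (w₂ c τ).re := by
    have h4 : (2 * w₂ c τ + w₃ c τ) + (2 * w₂ c τ - w₃ c τ) = 4 * w₂ c τ := by ring
    calc (2 * w₂ c τ + w₃ c τ).re + (2 * w₂ c τ - w₃ c τ).re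
        = ((2 * w₂ c τ + w₃ c τ) + (2 * w₂ c τ - w₃ c τ)).re := (Complex.add_re _ _).symm
      _ = ((4:ℂ) * w₂ c τ).re := by rw [h4]
      _ = 4 * (w₂ c τ).re := by simp [Complex.mul_re]
  exact ⟨hl_lt, hsq1, by linarith, hApos, hBpos⟩
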